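/- Let (S,+) be a commutative semigroup and let F = {s₁, s₂, …, s_l} ⊆ S be a finite nonempty set of cardinality l. Let HC_F = {(a + n·s₁, a + n·s₂, …, a + n·s_l) : a ∈ S, n ∈ ℕ} be the set of all homothetic copies of F, which is a subsemigroup of S^l. Then for any piecewise syndetic subset M ⊆ S, the set M^l ∩ HC_F is piecewise syndetic in the semigroup HC_F. -/
import Mathlib


/-- `A` is thick relative to the subsemigroup `I` of `T`. -/
def ThickIn {T : Type*} [AddCommSemigroup T] (I A : Set T) : Prop :=
  ∀ E : Finset T, ↑E ⊆ I → E.Nonempty → ∃ z ∈ I, ∀ e ∈ E, e + z ∈ A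

/-- `A` is piecewise syndetic relative to the subsemigroup `I` of `T`. -/
def PiecewiseSyndeticIn {T : Type*} [AddCommSemigroup T] (I A : Set T) : Prop :=
  ∃ G : Finset T, ↑G ⊆ I ∧ G.Nonempty ∧ ThickIn I {s ∈ I | ∃ g ∈ G, g + s ∈ A}

/-- `A` is thick in an additive commutative semigroup. -/
def Thick {T : Type*} [AddCommSemigroup T] (A : Set T) : Prop :=
  ∀ E : Finset T, E.Nonempty → ∃ z : T, ∀ e ∈ E, e + z ∈ A

/-- `A` is piecewise syndetic. -/
def PiecewiseSyndetic {T : Type*} [AddCommSemigroup T] (A : Set T) : Prop :=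
  ∃ G : Finset T, G.Nonempty ∧ Thick {s : T | ∃ g ∈ G, g + s ∈ A}

/-- `pnsmul n x` is the sum of `x` with itself `n` times, for a positive integer `n`. -/
def pnsmul {S : Type*} [AddSemigroup S] (n : ℕ+) (x : S) : S :=
  Nat.rec (motive := fun _ => S) x (fun _ y => y + x) n.natPred

/-- `HC s` is the set of homothetic copies `(a + n·s₁, …, a + n·s_l)` of the finite set
enumerated by `s : Fin l → S`; it is a subsemigroup of `S^l`. -/
def HC {S : Type*} [AddCommSemigroup S] {l : ℕ} (s : Fin l → S) : Set (Fin l → S) :=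
  Set.range fun p : S × ℕ+ => fun i => p.1 + pnsmul p.2 (s i)

set_option linter.unusedSectionVars false
set_option linter.unusedVariables false
set_option maxHeartbeats 1000000
open Filter Set



section Abstract

variable {X : Type*} [AddSemigroup X] [TopologicalSpace X] [CompactSpace X] [T2Space X]

/-- `L` is a left ideal of the subsemigroup with carrier `C`. -/
def IsLI (C L : Set X) : Prop :=
  L.Nonempty ∧ L ⊆ C ∧ ∀ c ∈ C, ∀ x ∈ L, c + x ∈ L

/-- `L` is a minimal left ideal of `C`. -/
def IsMinLI (C L : Set X) : Prop :=
  IsLI C L ∧ ∀ L', IsLI C L' → L' ⊆ L → L' = L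

lemma isLI_image_add {C : Set X} (hCadd : ∀ a ∈ C, ∀ b ∈ C, a + b ∈ C) (hCne : C.Nonempty)
    {x : X} (hx : x ∈ C) : IsLI C ((· + x) '' C) := by
  refine ⟨hCne.image _, ?_, ?_⟩
  · rintro - ⟨c, hc, rfl⟩; exact hCadd _ hc _ hx
  · rintro c hc - ⟨d, hd, rfl⟩
    exact ⟨c + d, hCadd _ hc _ hd, by exact add_assoc _ _ _⟩

lemma image_add_subset {C L : Set X} (hL : IsLI C L) {x : X} (hx : x ∈ L) :
    (· + x) '' C ⊆ L := by
  rintro - ⟨c, hc, rfl⟩; exact hL.2.2 _ hc _ hx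

lemma exists_isMinLI_subset (hr : ∀ q : X, Continuous (· + q)) {C : Set X} (hC : IsClosed C)
    (hCadd : ∀ a ∈ C, ∀ b ∈ C, a + b ∈ C)
    {L₀ : Set X} (hL₀ : IsLI C L₀) (hL₀c : IsClosed L₀) :
    ∃ L, L ⊆ L₀ ∧ IsMinLI C L ∧ IsClosed L := by
  have hchain : ∀ c ⊆ {L : Set X | IsLI C L ∧ IsClosed L}, IsChain (· ⊆ ·) c → c.Nonempty →
      ∃ lb ∈ {L : Set X | IsLI C L ∧ IsClosed L}, ∀ s ∈ c, lb ⊆ s := by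
    intro c hcs hc hcne
    have hne : (⋂₀ c).Nonempty := by
      have := @IsCompact.nonempty_iInter_of_directed_nonempty_isCompact_isClosed _ _ _
        hcne.coe_sort ((↑) : c → Set X)
        (DirectedOn.directed_val (IsChain.directedOn hc.symm))
        (fun i => (hcs i.prop).1.1) (fun i => (hcs i.prop).2.isCompact)
        (fun i => (hcs i.prop).2)
      rwa [Set.sInter_eq_iInter]
    refine ⟨⋂₀ c, ⟨⟨hne, ?_, ?_⟩, isClosed_sInter fun t ht => (hcs ht).2⟩,
      fun s hs => Set.sInter_subset_of_mem hs⟩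
    · obtain ⟨t, ht⟩ := hcne
      exact (Set.sInter_subset_of_mem ht).trans (hcs ht).1.2.1
    · intro a ha x hx
      rw [Set.mem_sInter] at hx ⊢
      exact fun t ht => (hcs ht).1.2.2 _ ha _ (hx t ht)
  obtain ⟨L, hLsub, hLmem, hLmin⟩ :=
    zorn_superset_nonempty {L | IsLI C L ∧ IsClosed L} hchain L₀ ⟨hL₀, hL₀c⟩
  · refine ⟨L, hLsub, ⟨hLmem.1, ?_⟩, hLmem.2⟩
    intro L' hL' hL'sub
    obtain ⟨x, hx⟩ := hL'.1
    have hxC : x ∈ C := hL'.2.1 hx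
    have hK : IsLI C ((· + x) '' C) := isLI_image_add hCadd ⟨x, hxC⟩ hxC
    have hKc : IsClosed ((· + x) '' C) := (hC.isCompact.image (hr x)).isClosed
    have hKL : (· + x) '' C ⊆ L := (image_add_subset hL' hx).trans hL'sub
    have : L ⊆ (· + x) '' C := hLmin ⟨hK, hKc⟩ hKL
    exact Set.Subset.antisymm hL'sub (this.trans (image_add_subset hL' hx))

/-- For `x` in a minimal left ideal `L` of `C`, we have `C + x = L`. -/
lemma isMinLI_image_add_eq {C L : Set X} (hCadd : ∀ a ∈ C, ∀ b ∈ C, a + b ∈ C)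
    (hCne : C.Nonempty) (hL : IsMinLI C L) {x : X} (hx : x ∈ L) :
    (· + x) '' C = L :=
  hL.2 _ (isLI_image_add hCadd hCne (hL.1.2.1 hx)) (image_add_subset hL.1 hx)

/-- A right translate of a minimal left ideal is a minimal left ideal. -/
lemma isMinLI_image_add {C L : Set X} (hCadd : ∀ a ∈ C, ∀ b ∈ C, a + b ∈ C)
    (hCne : C.Nonempty) (hL : IsMinLI C L) {t : X} (ht : t ∈ C) :
    IsMinLI C ((· + t) '' L) := by
  obtain ⟨y₀, hy₀⟩ := hL.1.1
  constructor
  · refine ⟨⟨y₀ + t, ⟨y₀, hy₀, rfl⟩⟩, ?_, ?_⟩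
    · rintro - ⟨y, hy, rfl⟩; exact hCadd _ (hL.1.2.1 hy) _ ht
    · rintro c hc - ⟨y, hy, rfl⟩
      exact ⟨c + y, hL.1.2.2 _ hc _ hy, by exact add_assoc _ _ _⟩
  · intro L' hL' hL'sub
    obtain ⟨z, hz⟩ := hL'.1
    obtain ⟨y, hy, rfl⟩ := hL'sub hz
    have h1 : (· + (y + t)) '' C = ((· + t) ∘ (· + y)) '' C := by
      apply Set.image_congr
      intro c _
      exact (add_assoc c y t).symm
    have h2 : (· + (y + t)) '' C = (· + t) '' ((· + y) '' C) := by
      rw [h1, Set.image_comp]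
    have h3 : (· + (y + t)) '' C = (· + t) '' L := by
      rw [h2, isMinLI_image_add_eq hCadd hCne hL hy]
    refine Set.Subset.antisymm hL'sub ?_
    rw [← h3]
    exact image_add_subset hL' hz

/-- A minimal left ideal is contained in every two-sided ideal. -/
lemma isMinLI_subset_ideal {C L J : Set X} (hL : IsMinLI C L)
    (hJne : J.Nonempty) (hJC : J ⊆ C)
    (hJl : ∀ c ∈ C, ∀ j ∈ J, c + j ∈ J) (hJr : ∀ j ∈ J, ∀ c ∈ C, j + c ∈ J) :
    L ⊆ J := by
  obtain ⟨x, hx⟩ := hL.1.1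
  have hxC : x ∈ C := hL.1.2.1 hx
  obtain ⟨j, hj⟩ := hJne
  set K := (· + x) '' J with hK
  have hKL : IsLI C K := by
    refine ⟨⟨j + x, ⟨j, hj, rfl⟩⟩, ?_, ?_⟩
    · rintro - ⟨i, hi, rfl⟩; exact hL.1.2.1 (hL.1.2.2 _ (hJC hi) _ hx)
    · rintro c hc - ⟨i, hi, rfl⟩
      exact ⟨c + i, hJl _ hc _ hi, by exact add_assoc _ _ _⟩
  have hKsub : K ⊆ L := by
    rintro - ⟨i, hi, rfl⟩; exact hL.1.2.2 _ (hJC hi) _ hx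
  have : K = L := hL.2 _ hKL hKsub
  rw [← this]
  rintro - ⟨i, hi, rfl⟩
  exact hJr _ hi _ hxC

/-- HS Theorem 1.65 (one direction): if `x ∈ T ∩ K(C)` then `x` lies in a
minimal left ideal of the closed subsemigroup `T ⊆ C`. -/
lemma mem_minLI_of_mem_minLI_sup (hr : ∀ q : X, Continuous (· + q))
    {C T L : Set X} (hC : IsClosed C) (hCadd : ∀ a ∈ C, ∀ b ∈ C, a + b ∈ C)
    (hT : IsClosed T) (hTC : T ⊆ C) (hTadd : ∀ a ∈ T, ∀ b ∈ T, a + b ∈ T)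
    (hL : IsMinLI C L) {x : X} (hxT : x ∈ T) (hxL : x ∈ L) :
    ∃ LT, IsMinLI T LT ∧ x ∈ LT := by
  have hTne : T.Nonempty := ⟨x, hxT⟩
  have hCne : C.Nonempty := ⟨x, hTC hxT⟩
  have hL₀ : IsLI T ((· + x) '' T) := isLI_image_add hTadd hTne hxT
  have hL₀c : IsClosed ((· + x) '' T) := (hT.isCompact.image (hr x)).isClosed
  obtain ⟨LT, hLTsub, hLTmin, hLTc⟩ := exists_isMinLI_subset hr hT hTadd hL₀ hL₀c
  -- LT is a compact subsemigroup; get an idempotent u ∈ LT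
  obtain ⟨u, huLT, huu⟩ := exists_idempotent_in_compact_add_subsemigroup hr LT
    hLTmin.1.1 hLTc.isCompact
    (fun a ha b hb => hLTmin.1.2.2 _ (hLTmin.1.2.1 ha) _ hb)
  -- u ∈ L
  have huL : u ∈ L := by
    have : LT ⊆ L := hLTsub.trans (by
      rintro - ⟨t, htT, rfl⟩
      exact hL.1.2.2 _ (hTC htT) _ hxL)
    exact this huLT
  -- x = w + u for some w ∈ C, hence x + u = x
  have hCu : (· + u) '' C = L := isMinLI_image_add_eq hCadd hCne hL huL
  have hxCu : x ∈ (· + u) '' C := by rw [hCu]; exact hxL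
  obtain ⟨w, hw, hwu⟩ := hxCu
  have hwu' : w + u = x := hwu
  have hxu : x + u = x := by
    calc x + u = (w + u) + u := by rw [hwu']
    _ = w + (u + u) := add_assoc _ _ _
    _ = w + u := by rw [huu]
    _ = x := hwu'
  have : x + u ∈ LT := hLTmin.1.2.2 _ hxT _ huLT
  rw [hxu] at this
  exact ⟨LT, hLTmin, this⟩

end Abstract


attribute [local instance] Ultrafilter.add Ultrafilter.addSemigroup

section Ultra
variable {α β : Type*}

lemma mem_ultra_add [AddSemigroup α] (U V : Ultrafilter α) (A : Set α) :
    A ∈ U + V ↔ {a | {b | a + b ∈ A} ∈ V} ∈ U := by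
  have h := Ultrafilter.eventually_add U V (· ∈ A)
  simp only [Filter.eventually_iff, Ultrafilter.mem_coe] at h
  simpa using h

lemma ultra_map_add [AddSemigroup α] [AddSemigroup β] (f : α → β)
    (hf : ∀ a b, f (a + b) = f a + f b) (U V : Ultrafilter α) :
    (U + V).map f = U.map f + V.map f := by
  apply Ultrafilter.ext
  intro A
  rw [Ultrafilter.mem_map, mem_ultra_add, mem_ultra_add, Ultrafilter.mem_map]
  have h2 : ∀ a : α, f ⁻¹' {b' | f a + b' ∈ A} = {b | a + b ∈ f ⁻¹' A} := by
    intro a; ext b; simp [← hf]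
  have h3 : f ⁻¹' {a' | {b' | a' + b' ∈ A} ∈ Ultrafilter.map f V} =
      {a | {b | a + b ∈ f ⁻¹' A} ∈ V} := by
    ext a
    simp only [Set.mem_preimage, Set.mem_setOf_eq, Ultrafilter.mem_map]
    have h4 : f ⁻¹' {b' | f a + b' ∈ A} = {b | f (a + b) ∈ A} := by
      ext b; simp [hf]
    rw [h4]
  rw [h3]

lemma continuous_ultra_map (f : α → β) : Continuous (Ultrafilter.map f) :=
  ultrafilterBasis_is_basis.continuous_iff.2 <| Set.forall_mem_range.mpr fun s ↦ by
    have : Ultrafilter.map f ⁻¹' {u | s ∈ u} = {u | f ⁻¹' s ∈ u} := by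
      ext u; simp [Ultrafilter.mem_map]
    rw [this]
    exact ultrafilter_isOpen_basic _

lemma upure_add_upure [AddSemigroup α] (a b : α) :
    (pure a : Ultrafilter α) + pure b = pure (a + b) := by
  apply Ultrafilter.ext
  intro A
  rw [mem_ultra_add]
  simp

lemma pure_add_comm [AddCommSemigroup α] (a : α) (U : Ultrafilter α) :
    (pure a : Ultrafilter α) + U = U + pure a := by
  apply Ultrafilter.ext
  intro A
  rw [mem_ultra_add, mem_ultra_add]
  simp only [Ultrafilter.mem_pure, Set.mem_setOf_eq]
  have : {b | a + b ∈ A} = {x | x + a ∈ A} := by ext b; simp [add_comm]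
  rw [this]

lemma continuous_pure_add [AddSemigroup α] (a : α) :
    Continuous fun p : Ultrafilter α => (pure a : Ultrafilter α) + p :=
  ultrafilterBasis_is_basis.continuous_iff.2 <| Set.forall_mem_range.mpr fun s ↦ by
    have : (fun p : Ultrafilter α => (pure a : Ultrafilter α) + p) ⁻¹' {u | s ∈ u} =
        {u | {b | a + b ∈ s} ∈ u} := by
      ext u
      rw [Set.mem_preimage, Set.mem_setOf_eq, Set.mem_setOf_eq, mem_ultra_add]
      simp [Ultrafilter.mem_pure]
    rw [this]
    exact ultrafilter_isOpen_basic _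

end Ultra
section pn
variable {S : Type*} [AddCommSemigroup S]

lemma pnsmul_add (m n : ℕ+) (x : S) : pnsmul (m + n) x = pnsmul m x + pnsmul n x := by
  have key : ∀ b a : ℕ,
      (Nat.rec (motive := fun _ => S) x (fun _ y => y + x) (a + b + 1)) =
        Nat.rec (motive := fun _ => S) x (fun _ y => y + x) a +
          Nat.rec (motive := fun _ => S) x (fun _ y => y + x) b := by
    intro b
    induction b with
    | zero => intro a; rfl
    | succ b ih =>
        intro a
        have h1 : a + (b + 1) + 1 = (a + b + 1) + 1 := by omega
        rw [h1]
        show (Nat.rec (motive := fun _ => S) x (fun _ y => y + x) (a + b + 1)) + x = _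
        rw [ih a]
        exact add_assoc _ _ _
  have hnp : (m + n).natPred = m.natPred + n.natPred + 1 := by
    have hm := m.pos
    have hn := n.pos
    have : ((m + n : ℕ+) : ℕ) = (m : ℕ) + (n : ℕ) := by exact_mod_cast rfl
    simp only [PNat.natPred]
    omega
  show Nat.rec (motive := fun _ => S) x _ ((m + n).natPred) = _
  rw [hnp]
  exact key _ _

end pn

lemma mem_closure_of_continuous_image {X Y : Type*} [TopologicalSpace X] [TopologicalSpace Y]
    {f : X → Y} (hf : Continuous f) {A : Set X} {B : Set Y} {q : X}
    (hq : q ∈ closure A) (h : ∀ a ∈ A, f a ∈ B) : f q ∈ closure B := by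
  have h1 : f q ∈ closure (f '' A) := image_closure_subset_closure_image hf ⟨q, hq, rfl⟩
  exact closure_mono (by rintro - ⟨a, ha, rfl⟩; exact h a ha) h1
section MainWork

attribute [local instance] Ultrafilter.add Ultrafilter.addSemigroup

variable {S : Type*} [AddCommSemigroup S] {l : ℕ}

/-- The coordinate homomorphism `(a, n) ↦ a + n·sᵢ`. -/
def auxpi (s : Fin l → S) (i : Fin l) (r : S × ℕ+) : S := r.1 + pnsmul r.2 (s i)

/-- The homomorphism onto `HC s`. -/
def auxphi (s : Fin l → S) (r : S × ℕ+) : Fin l → S := fun i => auxpi s i r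

lemma auxpi_add (s : Fin l → S) (i : Fin l) (r r' : S × ℕ+) :
    auxpi s i (r + r') = auxpi s i r + auxpi s i r' := by
  show (r.1 + r'.1) + pnsmul (r.2 + r'.2) (s i) = _
  rw [pnsmul_add]
  exact add_add_add_comm _ _ _ _

lemma auxphi_add (s : Fin l → S) (r r' : S × ℕ+) :
    auxphi s (r + r') = auxphi s r + auxphi s r' :=
  funext fun i => auxpi_add s i r r'

lemma ps_product (s : Fin l → S) (hl : 0 < l) (M : Set S) (hM : PiecewiseSyndetic M) :
    PiecewiseSyndetic {r : S × ℕ+ | ∀ i, auxpi s i r ∈ M} := by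
  classical
  obtain ⟨G, hGne, hGth⟩ := hM
  have x₀ : S := s ⟨0, hl⟩
  set D : Set S := {x | ∃ g ∈ G, g + x ∈ M} with hD
  have hrS : ∀ q : Ultrafilter S, Continuous (· + q) := fun q =>
    Ultrafilter.continuous_add_left q
  have hrR : ∀ q : Ultrafilter (S × ℕ+), Continuous (· + q) := fun q =>
    Ultrafilter.continuous_add_left q
  -- Step A: an ultrafilter `w` containing every translate of the thick set `D`.
  have hFIP : ∀ T : Finset (Set S), ↑T ⊆ Set.range (fun a : S => {x | a + x ∈ D}) →
      (⋂₀ (↑T : Set (Set S))).Nonempty := by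
    intro T hT
    rcases T.eq_empty_or_nonempty with rfl | hTne
    · simp only [Finset.coe_empty, Set.sInter_empty]
      exact ⟨x₀, trivial⟩
    · have hch : ∀ u : {u // u ∈ T}, ∃ a : S, {x | a + x ∈ D} = (u : Set S) :=
        fun u => hT u.2
      choose f hf using hch
      obtain ⟨z, hz⟩ := hGth (T.attach.image f) ((hTne.attach).image f)
      refine ⟨z, ?_⟩
      rw [Set.mem_sInter]
      intro u hu
      have hu' : u ∈ T := hu
      have h1 := hz (f ⟨u, hu'⟩) (Finset.mem_image_of_mem f (Finset.mem_attach _ _))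
      have h2 : {x | f ⟨u, hu'⟩ + x ∈ D} = u := hf ⟨u, hu'⟩
      rw [← h2]
      exact h1
  obtain ⟨w, hw⟩ := Ultrafilter.exists_ultrafilter_of_finite_inter_nonempty _ hFIP
  have hwD : ∀ a : S, {x | a + x ∈ D} ∈ w := fun a => hw ⟨a, rfl⟩
  -- Step B: a minimal left ideal `L` of `βS` and `p ∈ L` with `M ∈ p`.
  have univadd : ∀ a ∈ (Set.univ : Set (Ultrafilter S)), ∀ b ∈ (Set.univ : Set (Ultrafilter S)),
      a + b ∈ (Set.univ : Set (Ultrafilter S)) := fun _ _ _ _ => trivial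
  have hD_mem : ∀ u : Ultrafilter S, D ∈ u + w := by
    intro u
    rw [mem_ultra_add]
    have h : {a : S | {b | a + b ∈ D} ∈ w} = Set.univ :=
      Set.eq_univ_of_forall fun a => hwD a
    rw [h]
    exact Filter.univ_mem
  have hLI0 : IsLI (Set.univ : Set (Ultrafilter S)) ((· + w) '' Set.univ) :=
    isLI_image_add univadd ⟨pure x₀, trivial⟩ trivial
  obtain ⟨L₁, hL₁sub, hL₁min, hL₁c⟩ := exists_isMinLI_subset hrS isClosed_univ univadd hLI0
    ((isClosed_univ.isCompact.image (hrS w)).isClosed)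
  obtain ⟨q, hq⟩ := hL₁min.1.1
  have hDq : D ∈ q := by
    obtain ⟨u, -, rfl⟩ := hL₁sub hq
    exact hD_mem u
  have hexg : ∃ g ∈ (G : Set S), {x | g + x ∈ M} ∈ q := by
    rw [← Ultrafilter.finite_biUnion_mem_iff G.finite_toSet]
    have h : (⋃ g ∈ (G : Set S), {x : S | g + x ∈ M}) = D := by
      ext x; simp [hD]
    rwa [h]
  obtain ⟨g₀, hg₀G, hg₀⟩ := hexg
  have hMp : M ∈ q + pure g₀ := by
    rw [mem_ultra_add]
    have h : {a : S | {b | a + b ∈ M} ∈ (pure g₀ : Ultrafilter S)} = {x | g₀ + x ∈ M} := by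
      ext a
      simp only [Set.mem_setOf_eq, Ultrafilter.mem_pure]
      constructor
      · intro h; rwa [add_comm]
      · intro h; rwa [add_comm]
    rw [h]
    exact hg₀
  set p : Ultrafilter S := q + pure g₀ with hpdef
  set L : Set (Ultrafilter S) := (· + pure g₀) '' L₁ with hLdef
  have hLmin : IsMinLI Set.univ L :=
    isMinLI_image_add univadd ⟨pure x₀, trivial⟩ hL₁min trivial
  have hpL : p ∈ L := ⟨q, hq, rfl⟩
  -- Step C: the product `Y = (βS)^l` and the minimal left ideal `LY = L^l`.
  have hrY : ∀ y : Fin l → Ultrafilter S, Continuous (· + y) := fun y =>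
    continuous_pi fun i => (hrS (y i)).comp (continuous_apply i)
  have univaddY : ∀ a ∈ (Set.univ : Set (Fin l → Ultrafilter S)),
      ∀ b ∈ (Set.univ : Set (Fin l → Ultrafilter S)),
      a + b ∈ (Set.univ : Set (Fin l → Ultrafilter S)) := fun _ _ _ _ => trivial
  set LY : Set (Fin l → Ultrafilter S) := {y | ∀ i, y i ∈ L} with hLY
  have hLYmin : IsMinLI Set.univ LY := by
    constructor
    · refine ⟨⟨fun _ => p, fun i => hpL⟩, Set.subset_univ _, ?_⟩
      intro c _ y hy i
      exact hLmin.1.2.2 (c i) trivial (y i) (hy i)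
    · intro L' hL' hL'sub
      obtain ⟨z, hz⟩ := hL'.1
      have hzLY : z ∈ LY := hL'sub hz
      have hKeq : (· + z) '' Set.univ = LY := by
        apply Set.Subset.antisymm
        · rintro - ⟨u, -, rfl⟩
          intro i
          have h := isMinLI_image_add_eq univadd ⟨pure x₀, trivial⟩ hLmin (hzLY i)
          rw [← h]
          exact ⟨u i, trivial, rfl⟩
        · intro y hy
          have hex : ∀ i, ∃ u : Ultrafilter S, u + z i = y i := by
            intro i
            have h := isMinLI_image_add_eq univadd ⟨pure x₀, trivial⟩ hLmin (hzLY i)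
            have hyi : y i ∈ L := hy i
            rw [← h] at hyi
            obtain ⟨u, -, hu⟩ := hyi
            exact ⟨u, hu⟩
          choose u hu using hex
          exact ⟨u, trivial, funext fun i => hu i⟩
      refine Set.Subset.antisymm hL'sub ?_
      rw [← hKeq]
      exact image_add_subset hL' hz
  have hpbarLY : (fun _ : Fin l => p) ∈ LY := fun i => hpL
  -- Step D: the subsemigroup `E` and its ideal `I` in `Y`.
  set ptI : S × ℕ+ → (Fin l → Ultrafilter S) := fun r i => pure (auxpi s i r) with hptI
  set ptD : S → (Fin l → Ultrafilter S) := fun a _ => pure a with hptD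
  set That : Set (Fin l → Ultrafilter S) := Set.range ptD ∪ Set.range ptI with hThat
  have hDD : ∀ a b : S, ptD a + ptD b = ptD (a + b) := fun a b =>
    funext fun i => upure_add_upure a b
  have hDI : ∀ (a : S) (r : S × ℕ+), ptD a + ptI r = ptI (a + r.1, r.2) := by
    intro a r
    funext i
    show (pure a : Ultrafilter S) + pure (auxpi s i r) = pure (auxpi s i (a + r.1, r.2))
    rw [upure_add_upure]
    congr 1
    show a + (r.1 + pnsmul r.2 (s i)) = (a + r.1) + pnsmul r.2 (s i)
    exact (add_assoc _ _ _).symm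
  have hID : ∀ (r : S × ℕ+) (a : S), ptI r + ptD a = ptI (r.1 + a, r.2) := by
    intro r a
    funext i
    show (pure (auxpi s i r) : Ultrafilter S) + pure a = pure (auxpi s i (r.1 + a, r.2))
    rw [upure_add_upure]
    congr 1
    show (r.1 + pnsmul r.2 (s i)) + a = (r.1 + a) + pnsmul r.2 (s i)
    exact add_right_comm _ _ _
  have hII : ∀ r r' : S × ℕ+, ptI r + ptI r' = ptI (r + r') := by
    intro r r'
    funext i
    show (pure (auxpi s i r) : Ultrafilter S) + pure (auxpi s i r') = pure (auxpi s i (r + r'))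
    rw [upure_add_upure, auxpi_add]
  have hlD : ∀ a : S, Continuous fun y : Fin l → Ultrafilter S => ptD a + y := fun a =>
    continuous_pi fun i => (continuous_pure_add a).comp (continuous_apply i)
  have hlI : ∀ r : S × ℕ+, Continuous fun y : Fin l → Ultrafilter S => ptI r + y := fun r =>
    continuous_pi fun i => (continuous_pure_add (auxpi s i r)).comp (continuous_apply i)
  have hThatadd : ∀ t ∈ That, ∀ t' ∈ That, t + t' ∈ That := by
    rintro t (⟨a, rfl⟩ | ⟨r, rfl⟩) t' (⟨b, rfl⟩ | ⟨r', rfl⟩)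
    · rw [hDD]; exact Or.inl (Set.mem_range_self _)
    · rw [hDI]; exact Or.inr (Set.mem_range_self _)
    · rw [hID]; exact Or.inr (Set.mem_range_self _)
    · rw [hII]; exact Or.inr (Set.mem_range_self _)
  have hlT : ∀ t ∈ That, Continuous fun y : Fin l → Ultrafilter S => t + y := by
    rintro t (⟨a, rfl⟩ | ⟨r, rfl⟩)
    · exact hlD a
    · exact hlI r
  have hTE : ∀ t ∈ That, ∀ e ∈ closure That, t + e ∈ closure That := by
    intro t ht e he
    exact mem_closure_of_continuous_image (hlT t ht) he (fun t' ht' => hThatadd t ht t' ht')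
  have hEadd : ∀ e ∈ closure That, ∀ e' ∈ closure That, e + e' ∈ closure That := by
    intro e he e' he'
    have h2 := mem_closure_of_continuous_image (hrY e') he (fun t ht => hTE t ht e' he')
    rwa [closure_closure] at h2
  have hIsubE : closure (Set.range ptI) ⊆ closure That :=
    closure_mono Set.subset_union_right
  have hIne : (closure (Set.range ptI)).Nonempty :=
    ⟨ptI (x₀, 1), subset_closure (Set.mem_range_self _)⟩
  have hTI : ∀ t ∈ That, ∀ x ∈ closure (Set.range ptI), t + x ∈ closure (Set.range ptI) := by
    intro t ht x hx
    refine mem_closure_of_continuous_image (hlT t ht) hx ?_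
    rintro - ⟨r, rfl⟩
    rcases ht with ⟨a, rfl⟩ | ⟨r', rfl⟩
    · rw [hDI]; exact Set.mem_range_self _
    · rw [hII]; exact Set.mem_range_self _
  have hEI : ∀ e ∈ closure That, ∀ x ∈ closure (Set.range ptI),
      e + x ∈ closure (Set.range ptI) := by
    intro e he x hx
    have h2 := mem_closure_of_continuous_image (hrY x) he (fun t ht => hTI t ht x hx)
    rwa [closure_closure] at h2
  have hIE : ∀ x ∈ closure (Set.range ptI), ∀ e ∈ closure That,
      x + e ∈ closure (Set.range ptI) := by
    intro x hx e he
    have h1 : ∀ r : S × ℕ+, ptI r + e ∈ closure (Set.range ptI) := by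
      intro r
      refine mem_closure_of_continuous_image (hlI r) he ?_
      rintro - (⟨a, rfl⟩ | ⟨r', rfl⟩)
      · rw [hID]; exact Set.mem_range_self _
      · rw [hII]; exact Set.mem_range_self _
    have h2 := mem_closure_of_continuous_image (hrY e) hx (fun t ht => by
      obtain ⟨r, rfl⟩ := ht
      exact h1 r)
    rwa [closure_closure] at h2
  have hpbarE : (fun _ : Fin l => p) ∈ closure That := by
    have hp' : p ∈ closure (Set.range (pure : S → Ultrafilter S)) := denseRange_pure _
    have hdiag : Continuous fun u : Ultrafilter S => (fun _ : Fin l => u) :=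
      continuous_pi fun _ => continuous_id
    refine mem_closure_of_continuous_image hdiag hp' ?_
    rintro - ⟨a, rfl⟩
    exact Or.inl ⟨a, rfl⟩
  obtain ⟨LE, hLEmin, hpbarLE⟩ := mem_minLI_of_mem_minLI_sup hrY isClosed_univ univaddY
    isClosed_closure (Set.subset_univ _) hEadd hLYmin hpbarE hpbarLY
  have hpbarI : (fun _ : Fin l => p) ∈ closure (Set.range ptI) :=
    isMinLI_subset_ideal hLEmin hIne hIsubE hEI hIE hpbarLE
  -- Step D': the homomorphism θ : β(S × ℕ+) → Y with image I.
  set θ : Ultrafilter (S × ℕ+) → (Fin l → Ultrafilter S) := fun u i => u.map (auxpi s i) with hθ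
  have hθcont : Continuous θ := continuous_pi fun i => continuous_ultra_map (auxpi s i)
  have hθadd : ∀ u v : Ultrafilter (S × ℕ+), θ (u + v) = θ u + θ v := by
    intro u v
    funext i
    exact ultra_map_add (auxpi s i) (fun a b => auxpi_add s i a b) u v
  have hθpure : ∀ r : S × ℕ+, θ (pure r) = ptI r := by
    intro r; funext i; exact Ultrafilter.map_pure _ _
  have hθsub : ∀ u : Ultrafilter (S × ℕ+), θ u ∈ closure (Set.range ptI) := by
    intro u
    have hu : u ∈ closure (Set.range (pure : S × ℕ+ → Ultrafilter (S × ℕ+))) :=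
      denseRange_pure _
    refine mem_closure_of_continuous_image hθcont hu ?_
    rintro - ⟨r, rfl⟩
    rw [hθpure]
    exact Set.mem_range_self _
  have hθsurj : closure (Set.range ptI) ⊆ θ '' Set.univ := by
    have h1 : IsClosed (θ '' Set.univ) := (isCompact_univ.image hθcont).isClosed
    refine closure_minimal ?_ h1
    rintro - ⟨r, rfl⟩
    exact ⟨pure r, trivial, hθpure r⟩
  have hIadd : ∀ a ∈ closure (Set.range ptI), ∀ b ∈ closure (Set.range ptI),
      a + b ∈ closure (Set.range ptI) := fun a ha b hb => hEI a (hIsubE ha) b hb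
  obtain ⟨LI2, hLI2min, hpbarLI2⟩ := mem_minLI_of_mem_minLI_sup hrY isClosed_univ univaddY
    isClosed_closure (Set.subset_univ _) hIadd hLYmin hpbarI hpbarLY
  -- Step D'': pull back to a minimal left ideal of β(S × ℕ+).
  have univaddR : ∀ a ∈ (Set.univ : Set (Ultrafilter (S × ℕ+))),
      ∀ b ∈ (Set.univ : Set (Ultrafilter (S × ℕ+))),
      a + b ∈ (Set.univ : Set (Ultrafilter (S × ℕ+))) := fun _ _ _ _ => trivial
  set KK : Set (Ultrafilter (S × ℕ+)) := {x | ∃ LL, IsMinLI Set.univ LL ∧ x ∈ LL} with hKK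
  have hKKne : KK.Nonempty := by
    have hLIuniv : IsLI (Set.univ : Set (Ultrafilter (S × ℕ+))) Set.univ :=
      ⟨⟨pure (x₀, 1), trivial⟩, subset_rfl, fun _ _ _ _ => trivial⟩
    obtain ⟨LL, -, hLLmin, -⟩ :=
      exists_isMinLI_subset hrR isClosed_univ univaddR hLIuniv isClosed_univ
    obtain ⟨x, hx⟩ := hLLmin.1.1
    exact ⟨x, LL, hLLmin, hx⟩
  have hKKl : ∀ u : Ultrafilter (S × ℕ+), ∀ k ∈ KK, u + k ∈ KK := by
    rintro u k ⟨LL, hLL, hk⟩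
    exact ⟨LL, hLL, hLL.1.2.2 u trivial k hk⟩
  have hKKr : ∀ k ∈ KK, ∀ u : Ultrafilter (S × ℕ+), k + u ∈ KK := by
    rintro k ⟨LL, hLL, hk⟩ u
    exact ⟨(· + u) '' LL, isMinLI_image_add univaddR ⟨pure (x₀, 1), trivial⟩ hLL trivial,
      ⟨k, hk, rfl⟩⟩
  have hJne : (θ '' KK).Nonempty := hKKne.image θ
  have hJsub : θ '' KK ⊆ closure (Set.range ptI) := by
    rintro - ⟨k, -, rfl⟩; exact hθsub k
  have hJl : ∀ c ∈ closure (Set.range ptI), ∀ j ∈ θ '' KK, c + j ∈ θ '' KK := by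
    intro c hc j hj
    obtain ⟨u, -, rfl⟩ := hθsurj hc
    obtain ⟨k, hk, rfl⟩ := hj
    exact ⟨u + k, hKKl u k hk, hθadd u k⟩
  have hJr : ∀ j ∈ θ '' KK, ∀ c ∈ closure (Set.range ptI), j + c ∈ θ '' KK := by
    intro j hj c hc
    obtain ⟨u, -, rfl⟩ := hθsurj hc
    obtain ⟨k, hk, rfl⟩ := hj
    exact ⟨k + u, hKKr k hk u, hθadd k u⟩
  have hpbarJ : (fun _ : Fin l => p) ∈ θ '' KK :=
    isMinLI_subset_ideal hLI2min hJne hJsub hJl hJr hpbarLI2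
  obtain ⟨rr, hrrKK, hθrr⟩ := hpbarJ
  obtain ⟨LL, hLLmin, hrrLL⟩ := hrrKK
  -- Step E: `A ∈ rr` and `rr` minimal imply `A` is piecewise syndetic.
  set A : Set (S × ℕ+) := {r | ∀ i, auxpi s i r ∈ M} with hA
  have hArr : A ∈ rr := by
    have hi : ∀ i, auxpi s i ⁻¹' M ∈ rr := by
      intro i
      have h1 : rr.map (auxpi s i) = p := congrFun hθrr i
      have h2 : M ∈ rr.map (auxpi s i) := by rw [h1]; exact hMp
      exact Ultrafilter.mem_map.mp h2
    have hAeq : A = ⋂ i, auxpi s i ⁻¹' M := by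
      ext r; simp [hA]
    rw [hAeq]
    exact Filter.iInter_mem.mpr hi
  set B : Set (S × ℕ+) := {t | {x | t + x ∈ A} ∈ rr} with hB
  have hsynd : ∃ Gf : Finset (S × ℕ+), Gf.Nonempty ∧ ∀ y : S × ℕ+, ∃ t ∈ Gf, t + y ∈ B := by
    by_contra hcon
    push_neg at hcon
    have hFIP' : ∀ T : Finset (Set (S × ℕ+)),
        ↑T ⊆ Set.range (fun t : S × ℕ+ => {x | t + x ∉ B}) →
        (⋂₀ (↑T : Set (Set (S × ℕ+)))).Nonempty := by
      intro T hT
      rcases T.eq_empty_or_nonempty with rfl | hTne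
      · simp only [Finset.coe_empty, Set.sInter_empty]
        exact ⟨(x₀, 1), trivial⟩
      · have hch : ∀ u : {u // u ∈ T}, ∃ t : S × ℕ+, {x | t + x ∉ B} = (u : Set (S × ℕ+)) :=
          fun u => hT u.2
        choose f hf using hch
        obtain ⟨y, hy⟩ := hcon (T.attach.image f) ((hTne.attach).image f)
        refine ⟨y, ?_⟩
        rw [Set.mem_sInter]
        intro u hu
        have hu' : u ∈ T := hu
        have h1 := hy (f ⟨u, hu'⟩) (Finset.mem_image_of_mem f (Finset.mem_attach _ _))
        have h2 : {x | f ⟨u, hu'⟩ + x ∉ B} = u := hf ⟨u, hu'⟩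
        rw [← h2]
        exact h1
    obtain ⟨w', hw'⟩ := Ultrafilter.exists_ultrafilter_of_finite_inter_nonempty _ hFIP'
    have hw'B : ∀ t : S × ℕ+, {x | t + x ∉ B} ∈ w' := fun t => hw' ⟨t, rfl⟩
    have h1 : w' + rr ∈ LL := hLLmin.1.2.2 w' trivial rr hrrLL
    have h2 : (· + (w' + rr)) '' Set.univ = LL :=
      isMinLI_image_add_eq univaddR ⟨pure (x₀, 1), trivial⟩ hLLmin h1
    have h3 : rr ∈ (· + (w' + rr)) '' Set.univ := by rw [h2]; exact hrrLL
    obtain ⟨u, -, huu⟩ := h3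
    have hA2 : A ∈ u + (w' + rr) := by
      have huu' : u + (w' + rr) = rr := huu
      rw [huu']
      exact hArr
    rw [mem_ultra_add] at hA2
    obtain ⟨a, ha⟩ := Ultrafilter.nonempty_of_mem hA2
    have ha' : {b | a + b ∈ A} ∈ w' + rr := ha
    rw [mem_ultra_add] at ha'
    have key : {x : S × ℕ+ | {b | x + b ∈ {b | a + b ∈ A}} ∈ rr} = {x | a + x ∈ B} := by
      ext x
      simp only [Set.mem_setOf_eq]
      have hset : {b : S × ℕ+ | a + (x + b) ∈ A} = {b | (a + x) + b ∈ A} := by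
        ext b
        simp only [Set.mem_setOf_eq]
        rw [← add_assoc]
      exact Iff.of_eq (congrArg (· ∈ rr) hset)
    rw [key] at ha'
    have hbad := hw'B a
    have hint : ({x : S × ℕ+ | a + x ∈ B} ∩ {x | a + x ∉ B}) ∈ w' :=
      Filter.inter_mem ha' hbad
    obtain ⟨x, hx1, hx2⟩ := Ultrafilter.nonempty_of_mem hint
    exact hx2 hx1
  obtain ⟨Gf, hGfne, hGf⟩ := hsynd
  refine ⟨Gf, hGfne, ?_⟩
  intro Ef hEfne
  have hch : ∀ e : S × ℕ+, ∃ t : S × ℕ+, e ∈ Ef → t ∈ Gf ∧ t + e ∈ B := by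
    intro e
    by_cases he : e ∈ Ef
    · obtain ⟨t, ht1, ht2⟩ := hGf e
      exact ⟨t, fun _ => ⟨ht1, ht2⟩⟩
    · exact ⟨(x₀, 1), fun h => absurd h he⟩
  choose t ht using hch
  have hZ : (⋂ e ∈ Ef, {x : S × ℕ+ | (t e + e) + x ∈ A}) ∈ rr := by
    exact (Filter.biInter_finset_mem Ef).mpr fun e he => (ht e he).2
  obtain ⟨z, hz⟩ := Ultrafilter.nonempty_of_mem hZ
  refine ⟨z, ?_⟩
  intro e he
  have hze : z ∈ {x : S × ℕ+ | (t e + e) + x ∈ A} := Set.mem_iInter₂.mp hz e he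
  refine ⟨t e, (ht e he).1, ?_⟩
  show t e + (e + z) ∈ A
  rw [← add_assoc]
  exact hze

end MainWork

/-- For a commutative semigroup `S`, a finite set `F = {s₁, …, s_l}` of cardinality `l`,
and a piecewise syndetic `M ⊆ S`, the set `M^l ∩ HC_F` is piecewise syndetic in the
semigroup `HC_F`. -/
theorem stmt9 {S : Type*} [AddCommSemigroup S] (l : ℕ) (hl : 0 < l)
    (s : Fin l → S) (hs : Function.Injective s)
    (M : Set S) (hM : PiecewiseSyndetic M) :
    PiecewiseSyndeticIn (HC s) ({f : Fin l → S | ∀ i, f i ∈ M} ∩ HC s) := by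
  classical
  have x₀ : S := s ⟨0, hl⟩
  obtain ⟨Gf, hGfne, hGfth⟩ := ps_product s hl M hM
  refine ⟨Gf.image (auxphi s), ?_, hGfne.image _, ?_⟩
  · intro g hg
    simp only [Finset.coe_image, Set.mem_image] at hg
    obtain ⟨r, -, rfl⟩ := hg
    exact ⟨r, rfl⟩
  · intro Ef hEfsub hEfne
    have hch : ∀ f : Fin l → S, ∃ r : S × ℕ+, f ∈ HC s → auxphi s r = f := by
      intro f
      by_cases hf : f ∈ HC s
      · obtain ⟨r, hr⟩ := hf
        exact ⟨r, fun _ => hr⟩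
      · exact ⟨(x₀, 1), fun h => absurd h hf⟩
    choose ρ hρ using hch
    obtain ⟨z, hz⟩ := hGfth (Ef.image ρ) (hEfne.image ρ)
    refine ⟨auxphi s z, ⟨z, rfl⟩, ?_⟩
    intro f hf
    have hfHC : f ∈ HC s := hEfsub hf
    have hfeq : auxphi s (ρ f) = f := hρ f hfHC
    obtain ⟨g, hgGf, hg⟩ := hz (ρ f) (Finset.mem_image_of_mem ρ hf)
    have e1 : f + auxphi s z = auxphi s (ρ f + z) := by
      rw [auxphi_add, hfeq]
    constructor
    · rw [e1]
      exact ⟨ρ f + z, rfl⟩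
    · refine ⟨auxphi s g, Finset.mem_image_of_mem _ hgGf, ?_⟩
      have e2 : auxphi s g + (f + auxphi s z) = auxphi s (g + (ρ f + z)) := by
        rw [e1, ← auxphi_add]
      rw [e2]
      constructor
      · intro i
        exact hg i
      · exact ⟨g + (ρ f + z), rfl⟩
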